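/- Let h ∈ ℂ^L and x ∈ ℂ^N, and let x̃ ∈ ℂ^{N+P} be the cyclic-prefixed sequence obtained by prepending to x its own last P entries (x̃[m] = x[N−P+m] for 0 ≤ m ≤ P−1, x̃[m] = x[m−P] for P ≤ m ≤ N+P−1). Then T(h) x̃ = C(pad(h)) x = pad(h) ⊛ x; i.e., applying the linear (Toeplitz) channel to the cyclic-prefixed input and discarding prefix/tail yields exactly the cyclic convolution of the zero-padded impulse response with x. -/

import Mathlib

open Matrix

/-- The unitary `N`-point DFT matrix. -/
noncomputable def dft (N : ℕ) : Matrix (Fin N) (Fin N) ℂ :=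
  Matrix.of fun k n : Fin N =>
    ((1 / Real.sqrt N : ℝ) : ℂ) *
      Complex.exp (-2 * (Real.pi : ℂ) * Complex.I * ((k : ℕ) : ℂ) * ((n : ℕ) : ℂ) / (N : ℂ))

/-- Cyclic convolution on `ℂ^N`. -/
noncomputable def cconv {N : ℕ} (c x : Fin N → ℂ) : Fin N → ℂ := fun n => ∑ m, c m * x (n - m)

/-- Zero-padding of `h ∈ ℂ^L` to length `N`. -/
noncomputable def pad (N : ℕ) {L : ℕ} (hLN : L ≤ N) (h : Fin L → ℂ) : Fin N → ℂ :=
  fun n => if hn : (n : ℕ) < L then h ⟨n, hn⟩ else 0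

/-- Toeplitz channel matrix `T(h) ∈ ℂ^{N×(N+P)}`. -/
noncomputable def toep (N : ℕ) {L : ℕ} (P : ℕ) (h : Fin L → ℂ) : Matrix (Fin N) (Fin (N + P)) ℂ :=
  Matrix.of fun (n : Fin N) (m : Fin (N + P)) =>
    if hk : 0 ≤ (P : ℤ) + (n : ℕ) - (m : ℕ) ∧ (P : ℤ) + (n : ℕ) - (m : ℕ) ≤ (L : ℤ) - 1
    then h ⟨((P : ℤ) + (n : ℕ) - (m : ℕ)).toNat, by omega⟩ else 0

/-- First `P` columns of `T(h)`. -/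
noncomputable def toepP (N : ℕ) {L : ℕ} (P : ℕ) (h : Fin L → ℂ) : Matrix (Fin N) (Fin P) ℂ :=
  Matrix.of fun n m => toep N P h n ⟨(m : ℕ), by have := m.isLt; omega⟩

/-- Last `N` entries of `w ∈ ℂ^{N+P}`. -/
noncomputable def wStar (N P : ℕ) (w : Fin (N + P) → ℂ) : Fin N → ℂ :=
  fun n => w ⟨P + (n : ℕ), by have := n.isLt; omega⟩

/-- First `P` entries of `w` minus the last `P` entries of `w*`. -/
noncomputable def deltaP (N P : ℕ) (hPN : P ≤ N) (w : Fin (N + P) → ℂ) : Fin P → ℂ :=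
  fun m => w ⟨(m : ℕ), by have := m.isLt; omega⟩ -
    wStar N P w ⟨N - P + (m : ℕ), by have := m.isLt; omega⟩

/-- Cyclic-prefixed sequence: prepend the last `P` entries of `x` to `x`. -/
noncomputable def cyclicPrefix (N P : ℕ) (hPN : P ≤ N) (x : Fin N → ℂ) : Fin (N + P) → ℂ :=
  fun m => if hm : (m : ℕ) < P then x ⟨N - P + (m : ℕ), by omega⟩
           else x ⟨(m : ℕ) - P, by have := m.isLt; omega⟩

/-- Effective jammer channel matrix `𝗝[k] = [√N ĵ[k], R[k]]`. -/
noncomputable def effJ (N : ℕ) {L : ℕ} (P B : ℕ) (hLN : L ≤ N) (h : Fin B → Fin L → ℂ)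
    (k : Fin N) : Matrix (Fin B) (Fin (P + 1)) ℂ :=
  Matrix.of fun b : Fin B =>
    Fin.cons ((Real.sqrt N : ℂ) * (dft N *ᵥ pad N hLN (h b)) k)
      (fun m : Fin P => Matrix.vecMul (dft N k) (toepP N P (h b)) m)

set_option maxHeartbeats 2000000 in
/-- Applying the Toeplitz channel to the cyclic-prefixed input yields the
cyclic convolution: `T(h) x̃ = C(pad(h)) x = pad(h) ⊛ x`. -/
theorem stmt3 (N L P : ℕ) (hL : 1 ≤ L) (hLN : L ≤ N) (hP : L - 1 ≤ P) (hPN : P ≤ N)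
    (h : Fin L → ℂ) (x : Fin N → ℂ) :
    toep N P h *ᵥ cyclicPrefix N P hPN x = Matrix.circulant (pad N hLN h) *ᵥ x ∧
    toep N P h *ᵥ cyclicPrefix N P hPN x = cconv (pad N hLN h) x := by

  haveI : NeZero N := ⟨by omega⟩
  have main : toep N P h *ᵥ cyclicPrefix N P hPN x = cconv (pad N hLN h) x := by
    funext n
    have hjP : ∀ j : Fin L, (j : ℕ) ≤ P := fun j => by have := j.isLt; omega
    set e : Fin L ↪ Fin (N + P) :=
      ⟨fun j => ⟨P + (n : ℕ) - (j : ℕ), by have := j.isLt; have := n.isLt; omega⟩,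
       show Function.Injective _ from fun j j' hjj' => by
         have h1 := hjP j; have h2 := hjP j'
         have h3 : P + (n : ℕ) - (j : ℕ) = P + (n : ℕ) - (j' : ℕ) := congrArg Fin.val hjj'
         exact Fin.ext (by omega)⟩ with he
    set e' : Fin L ↪ Fin N := ⟨Fin.castLE hLN, Fin.castLE_injective hLN⟩ with he'
    have hLHS : (toep N P h *ᵥ cyclicPrefix N P hPN x) n
        = ∑ j : Fin L, toep N P h n (e j) * cyclicPrefix N P hPN x (e j) := by
      rw [Matrix.mulVec, dotProduct,
        ← Finset.sum_map Finset.univ e (fun m => toep N P h n m * cyclicPrefix N P hPN x m)]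
      refine (Finset.sum_subset (Finset.subset_univ _) ?_).symm
      intro m _ hm
      have hz : ¬ (0 ≤ (P : ℤ) + (n : ℕ) - (m : ℕ) ∧ (P : ℤ) + (n : ℕ) - (m : ℕ) ≤ (L : ℤ) - 1) := by
        intro hc
        apply hm
        simp only [Finset.mem_map, Finset.mem_univ, true_and]
        refine ⟨⟨((P : ℤ) + (n : ℕ) - (m : ℕ)).toNat, by omega⟩, ?_⟩
        apply Fin.ext
        simp only [he, Function.Embedding.coeFn_mk]
        omega
      simp only [toep, Matrix.of_apply]
      rw [dif_neg hz, zero_mul]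
    have hRHS : cconv (pad N hLN h) x n = ∑ j : Fin L, pad N hLN h (e' j) * x (n - e' j) := by
      rw [cconv, ← Finset.sum_map Finset.univ e' (fun m => pad N hLN h m * x (n - m))]
      refine (Finset.sum_subset (Finset.subset_univ _) ?_).symm
      intro m _ hm
      have hz : ¬ ((m : ℕ) < L) := by
        intro hc
        apply hm
        simp only [Finset.mem_map, Finset.mem_univ, true_and]
        exact ⟨⟨(m : ℕ), hc⟩, Fin.ext rfl⟩
      simp [pad, hz]
    rw [hLHS, hRHS]
    refine Finset.sum_congr rfl fun j _ => ?_
    have hj := j.isLt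
    have hn := n.isLt
    have hTe : toep N P h n (e j) = h j := by
      have hc : 0 ≤ (P : ℤ) + (n : ℕ) - ((P + (n : ℕ) - (j : ℕ) : ℕ) : ℕ) ∧
          (P : ℤ) + (n : ℕ) - ((P + (n : ℕ) - (j : ℕ) : ℕ) : ℕ) ≤ (L : ℤ) - 1 := by
        have := hjP j; omega
      simp only [toep, he, Matrix.of_apply, Function.Embedding.coeFn_mk]
      rw [dif_pos hc]
      congr 1
      apply Fin.ext
      simp only []
      have := hjP j; omega
    have hpad : pad N hLN h (e' j) = h j := by
      simp only [pad, he', Function.Embedding.coeFn_mk, Fin.coe_castLE, j.isLt, dif_pos]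
    rw [hTe, hpad]
    congr 1
    have hje : ((e' j : Fin N) : ℕ) = (j : ℕ) := rfl
    have hsub : ((n - e' j : Fin N) : ℕ) = (N - (j : ℕ) + (n : ℕ)) % N := by
      rw [Fin.sub_def, hje]
    by_cases hcase : (j : ℕ) ≤ (n : ℕ)
    · have hm : ¬ ((P + (n : ℕ) - (j : ℕ) : ℕ) < P) := by have := hjP j; omega
      simp only [cyclicPrefix, he, Function.Embedding.coeFn_mk, dif_neg hm]
      congr 1
      apply Fin.ext
      simp only [hsub, hje] at *
      have : (N - (j : ℕ) + (n : ℕ)) % N = (n : ℕ) - (j : ℕ) := by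
        have h1 : N - (j : ℕ) + (n : ℕ) = N + ((n : ℕ) - (j : ℕ)) := by omega
        rw [h1, Nat.add_mod_left, Nat.mod_eq_of_lt (by omega)]
      omega
    · have hm : ((P + (n : ℕ) - (j : ℕ) : ℕ) < P) := by have := hjP j; omega
      simp only [cyclicPrefix, he, Function.Embedding.coeFn_mk, dif_pos hm]
      congr 1
      apply Fin.ext
      simp only [hsub, hje] at *
      have : (N - (j : ℕ) + (n : ℕ)) % N = N - (j : ℕ) + (n : ℕ) := by
        rw [Nat.mod_eq_of_lt (by omega)]
      omega
  refine ⟨?_, main⟩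
  rw [main]
  funext n
  rw [cconv, Matrix.mulVec, dotProduct]
  refine Fintype.sum_equiv (Equiv.subLeft n) _ _ fun m => ?_
  simp only [Matrix.circulant_apply, Equiv.subLeft_apply, sub_sub_cancel]
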